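/- For any sequence u with r distinct letters, fw(u) equals the minimum s such that every binary (r, s)-formation on the letters of u contains u, where a binary formation is one in which every constituent permutation equals a fixed permutation p or its reverse. -/

import Mathlib

open Function Finset in
/-- Erdős–Szekeres (copied from mathlib Archive). -/
theorem my_erdos_szekeres {α : Type*} [LinearOrder α] {r s n : ℕ} {f : Fin n → α}
    (hn : r * s < n) (hf : Function.Injective f) :
    (∃ t : Finset (Fin n), r < t.card ∧ StrictMonoOn f ↑t) ∨
      ∃ t : Finset (Fin n), s < t.card ∧ StrictAntiOn f ↑t := by
  let inc_sequences_ending_in : Fin n → Finset (Finset (Fin n)) := fun i =>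
    univ.powerset.filter fun t => Finset.max t = i ∧ StrictMonoOn f ↑t
  let dec_sequences_ending_in : Fin n → Finset (Finset (Fin n)) := fun i =>
    univ.powerset.filter fun t => Finset.max t = i ∧ StrictAntiOn f ↑t
  have inc_i : ∀ i, {i} ∈ inc_sequences_ending_in i := fun i => by
    simp [inc_sequences_ending_in, StrictMonoOn]
  have dec_i : ∀ i, {i} ∈ dec_sequences_ending_in i := fun i => by
    simp [dec_sequences_ending_in, StrictAntiOn]
  let ab' : Fin n → ℕ × ℕ := by
    intro i
    apply
      (max' ((inc_sequences_ending_in i).image card) (Nonempty.image ⟨{i}, inc_i i⟩ _),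
        max' ((dec_sequences_ending_in i).image card) (Nonempty.image ⟨{i}, dec_i i⟩ _))
  generalize hab : ab' = ab
  rsuffices ⟨i, hi⟩ : ∃ i, r < (ab i).1 ∨ s < (ab i).2
  · refine Or.imp ?_ ?_ hi
    on_goal 1 =>
      have : (ab i).1 ∈ image card (inc_sequences_ending_in i) := by
        simp only [← hab]; exact max'_mem _ (Nonempty.image ⟨{i}, inc_i i⟩ _)
    on_goal 2 =>
      have : (ab i).2 ∈ image card (dec_sequences_ending_in i) := by
        simp only [← hab]; exact max'_mem _ (Nonempty.image ⟨{i}, dec_i i⟩ _)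
    all_goals
      intro hi
      rw [mem_image] at this
      obtain ⟨t, ht₁, ht₂⟩ := this
      refine ⟨t, by rwa [ht₂], ?_⟩
      rw [mem_filter] at ht₁
      apply ht₁.2.2
  have : Injective ab := by
    simp only [← hab]
    apply Function.Injective.of_lt_imp_ne
    intro i j k q
    injection q with q₁ q₂
    cases lt_or_gt_of_ne fun _ => ne_of_lt ‹i < j› (hf ‹f i = f j›)
    on_goal 1 =>
      apply ne_of_lt _ q₁
      have : (ab' i).1 ∈ image card (inc_sequences_ending_in i) := by exact max'_mem _ (Nonempty.image ⟨{i}, inc_i i⟩ _)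
    on_goal 2 =>
      apply ne_of_lt _ q₂
      have : (ab' i).2 ∈ image card (dec_sequences_ending_in i) := by exact max'_mem _ (Nonempty.image ⟨{i}, dec_i i⟩ _)
    all_goals
      rw [Nat.lt_iff_add_one_le]
      apply le_max'
      rw [mem_image] at this ⊢
      rcases this with ⟨t, ht₁, ht₂⟩
      rw [mem_filter] at ht₁
      have : t.max = i := by simp only [ht₁.2.1]
      refine ⟨insert j t, ?_, ?_⟩
      · rw [mem_filter]
        refine ⟨?_, ?_, ?_⟩
        · rw [mem_powerset]; apply subset_univ
        · convert max_insert (a := j) (s := t)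
          rw [ht₁.2.1, max_eq_left]
          apply WithBot.coe_le_coe.mpr (le_of_lt ‹i < j›)
        simp only [StrictMonoOn, StrictAntiOn, coe_insert, Set.mem_insert_iff, mem_coe]
        rintro x ⟨rfl | _⟩ y ⟨rfl | _⟩ _
        · apply (irrefl _ ‹j < j›).elim
        · exfalso
          apply not_le_of_gt (_root_.trans ‹i < j› ‹j < y›) (le_max_of_eq ‹y ∈ t› ‹t.max = i›)
        · first
          | apply lt_of_le_of_lt _ ‹f i < f j›
          | apply lt_of_lt_of_le ‹f j < f i› _
          rcases lt_or_eq_of_le (le_max_of_eq ‹x ∈ t› ‹t.max = i›) with (_ | rfl)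
          · apply le_of_lt (ht₁.2.2 ‹x ∈ t› (mem_of_max ‹t.max = i›) ‹x < i›)
          · rfl
        · apply ht₁.2.2 ‹x ∈ t› ‹y ∈ t› ‹x < y›
      · rw [card_insert_of_notMem, ht₂]
        intro
        apply not_le_of_gt ‹i < j› (le_max_of_eq ‹j ∈ t› ‹t.max = i›)
  by_contra! q
  let ran : Finset (ℕ × ℕ) := (range r).image Nat.succ ×ˢ (range s).image Nat.succ
  have : image ab univ ⊆ ran := by
    rintro ⟨x₁, x₂⟩
    simp only [ran, mem_image, exists_prop, mem_range, mem_univ, mem_product, true_and,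
      Prod.ext_iff]
    rintro ⟨i, rfl, rfl⟩
    specialize q i
    have z : 1 ≤ (ab i).1 ∧ 1 ≤ (ab i).2 := by
      simp only [← hab]
      constructor <;>
        · apply le_max'
          rw [mem_image]
          exact ⟨{i}, by solve_by_elim, card_singleton i⟩
    exact ⟨⟨(ab i).1 - 1, by omega⟩, (ab i).2 - 1, by omega⟩
  apply not_le_of_gt hn
  simpa [ran, Nat.succ_injective, card_image_of_injective, ‹Injective ab›] using card_le_card this

/-- A monotone (increasing or decreasing) sublist of prescribed length. -/
lemma exists_monotone_sublist {b : List ℕ} (hb : b.Nodup) {m : ℕ} (hm : 0 < m)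
    (hmm : m * m ≤ b.length) :
    ∃ l : List ℕ, l.Sublist b ∧ l.length = m ∧
      (l.Pairwise (· < ·) ∨ l.Pairwise (· > ·)) := by
  have hf : Function.Injective b.get := List.nodup_iff_injective_get.mp hb
  have hn : (m - 1) * (m - 1) < b.length := lt_of_lt_of_le (by cases m with
    | zero => omega
    | succ n => simp only [Nat.succ_sub_one]; nlinarith) hmm
  have key := my_erdos_szekeres (r := m - 1) (s := m - 1) hn hf
  have main : ∀ t : Finset (Fin b.length), m - 1 < t.card →
      (StrictMonoOn b.get ↑t ∨ StrictAntiOn b.get ↑t) →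
      ∃ l : List ℕ, l.Sublist b ∧ l.length = m ∧
        (l.Pairwise (· < ·) ∨ l.Pairwise (· > ·)) := by
    intro t ht hmono
    have hcard : m ≤ t.card := by omega
    obtain ⟨t', ht'sub, ht'card⟩ := Finset.exists_subset_card_eq hcard
    set is := t'.sort (· ≤ ·) with his
    have hsorted : is.Pairwise (· < ·) := (Finset.sortedLT_sort t').pairwise
    have hmem : ∀ i, i ∈ is → i ∈ t' := fun i hi => (Finset.mem_sort _).mp hi
    refine ⟨is.map b.get, ?_, ?_, ?_⟩
    · apply List.map_getElem_sublist
      exact hsorted.imp (fun h => h)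
    · rw [List.length_map, Finset.length_sort, ht'card]
    · rcases hmono with h | h
      · left
        rw [List.pairwise_map]
        refine hsorted.imp_of_mem ?_
        intro a c ha hc hac
        exact h (ht'sub (hmem a ha)) (ht'sub (hmem c hc)) hac
      · right
        rw [List.pairwise_map]
        refine hsorted.imp_of_mem ?_
        intro a c ha hc hac
        exact h (ht'sub (hmem a ha)) (ht'sub (hmem c hc)) hac
  rcases key with ⟨t, ht, hmono⟩ | ⟨t, ht, hmono⟩
  · exact main t ht (Or.inl hmono)
  · exact main t ht (Or.inr hmono)

/-- The binary formation with permutation `p` and orientation pattern `t`. -/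
def mkB (p : List ℕ) (t : List Bool) : List ℕ :=
  (t.map fun o => if o then p else p.reverse).flatten

lemma mem_mkB {p : List ℕ} {t : List Bool} {x : ℕ} (hx : x ∈ mkB p t) : x ∈ p := by
  unfold mkB at hx
  rw [List.mem_flatten] at hx
  obtain ⟨l, hl, hxl⟩ := hx
  rw [List.mem_map] at hl
  obtain ⟨o, _, rfl⟩ := hl
  cases o <;> simpa using hxl

lemma mkB_cons (p : List ℕ) (o : Bool) (t : List Bool) :
    mkB p (o :: t) = (if o then p else p.reverse) ++ mkB p t := by
  simp [mkB]

lemma mkB_length (p : List ℕ) (t : List Bool) :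
    (t.map fun o => if o then p else p.reverse).length = t.length := by
  simp

lemma mkB_filter (p : List ℕ) (t : List Bool) (P : ℕ → Bool) :
    (mkB p t).filter P = mkB (p.filter P) t := by
  induction t with
  | nil => rfl
  | cons o t ih =>
    rw [mkB_cons, mkB_cons, List.filter_append, ih]
    congr 1
    cases o <;> simp [List.filter_reverse]

lemma mkB_transfer {p q : List ℕ} (θ : ℕ → ℕ) (hpq : p.map θ = q) {t : List Bool} {v : List ℕ}
    (hv : v.Sublist (mkB p t)) : (v.map θ).Sublist (mkB q t) := by
  induction t generalizing v with
  | nil =>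
    have : v = [] := List.sublist_nil.mp hv
    simp [this]
  | cons o t ih =>
    rw [mkB_cons] at hv
    obtain ⟨v₁, v₂, rfl, h1, h2⟩ := List.sublist_append_iff.mp hv
    rw [List.map_append, mkB_cons]
    refine List.Sublist.append ?_ (ih h2)
    cases o
    · simp only [if_neg Bool.false_ne_true] at h1 ⊢
      have := h1.map θ
      rwa [List.map_reverse, hpq] at this
    · simpa [hpq] using h1.map θ

lemma filter_sublist_eq : ∀ {b l : List ℕ}, l.Sublist b → b.Nodup →
    b.filter (fun x => decide (x ∈ l)) = l := by
  intro b l h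
  induction h with
  | slnil => intro _; rfl
  | @cons l' b' a h ih =>
    intro hb
    rw [List.filter_cons]
    have ha : a ∉ l' := fun hal => (List.nodup_cons.mp hb).1 (h.subset hal)
    simp only [ha, decide_false, if_neg]
    · exact ih (List.nodup_cons.mp hb).2
  | @cons_cons l' b' a h ih =>
    intro hb
    rw [List.filter_cons]
    have ha : a ∉ b' := (List.nodup_cons.mp hb).1
    simp only [List.mem_cons, true_or, decide_true, if_pos]
    have heq : b'.filter (fun x => decide (x = a ∨ x ∈ l')) = b'.filter (fun x => decide (x ∈ l')) := by
      apply List.filter_congr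
      intro x hx
      have hne : x ≠ a := fun hxa => ha (hxa ▸ hx)
      simp [hne]
    rw [heq, ih (List.nodup_cons.mp hb).2]

lemma map_getD_indexOf {q p : List ℕ} (hq : q.Nodup) (hlen : q.length = p.length) :
    q.map (fun x => p.getD (q.idxOf x) 0) = p := by
  apply List.ext_getElem
  · simp [hlen]
  · intro i h1 h2
    rw [List.length_map] at h1
    rw [List.getElem_map]
    rw [hq.idxOf_getElem]
    exact List.getD_eq_getElem _ _ (hlen ▸ h1)

lemma injOn_getD_indexOf {q p : List ℕ} (hq : q.Nodup) (hp : p.Nodup)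
    (hlen : q.length ≤ p.length) :
    ∀ x ∈ q, ∀ y ∈ q, p.getD (q.idxOf x) 0 = p.getD (q.idxOf y) 0 → x = y := by
  intro x hx y hy hxy
  have hix : q.idxOf x < q.length := List.idxOf_lt_length_iff.mpr hx
  have hiy : q.idxOf y < q.length := List.idxOf_lt_length_iff.mpr hy
  rw [List.getD_eq_getElem _ _ (lt_of_lt_of_le hix hlen),
    List.getD_eq_getElem _ _ (lt_of_lt_of_le hiy hlen)] at hxy
  have hidx : q.idxOf x = q.idxOf y := (List.Nodup.getElem_inj_iff hp).mp hxy
  exact (List.idxOf_inj hx).mp hidx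

lemma extract : ∀ (n : ℕ) (bs : List (List ℕ)) (k : ℕ) (S : Finset ℕ), bs.length = n → 0 < k →
    k ^ (2 ^ n) ≤ S.card →
    (∀ b ∈ bs, b.Nodup ∧ b.toFinset = S) →
    ∃ T : Finset ℕ, T ⊆ S ∧ T.card = k ∧
      ∀ b ∈ bs, ((b.filter (fun x => decide (x ∈ T))).Pairwise (· < ·) ∨
        (b.filter (fun x => decide (x ∈ T))).Pairwise (· > ·)) := by
  intro n
  induction n with
  | zero =>
    intro bs k S hlen hk hcard _
    obtain ⟨T, hT, hTc⟩ := Finset.exists_subset_card_eq (le_trans (le_of_eq (show k = k ^ 2 ^ 0 by norm_num)) hcard)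
    have : bs = [] := List.length_eq_zero_iff.mp hlen
    exact ⟨T, hT, hTc, by simp [this]⟩
  | succ n ih =>
    intro bs k S hlen hk hcard hblocks
    obtain ⟨b, bs', rfl⟩ : ∃ b bs', bs = b :: bs' := by
      cases bs with
      | nil => simp at hlen
      | cons b bs' => exact ⟨b, bs', rfl⟩
    have hlen' : bs'.length = n := by simpa using hlen
    set m := k ^ (2 ^ n) with hm_def
    have hm : 0 < m := pow_pos hk _
    obtain ⟨hbnd, hbS⟩ := hblocks b (List.mem_cons_self)
    have hblen : b.length = S.card := by
      rw [← hbS, List.toFinset_card_of_nodup hbnd]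
    have hmm : m * m ≤ b.length := by
      rw [hblen]
      refine le_trans ?_ hcard
      rw [hm_def, ← pow_add]
      have h2 : 2 ^ n + 2 ^ n = 2 ^ (n + 1) := by rw [pow_succ]; ring
      rw [h2]
    obtain ⟨l, hlsub, hllen, hlsort⟩ := exists_monotone_sublist hbnd hm hmm
    have hlnd : l.Nodup := hlsub.nodup hbnd
    set T₁ := l.toFinset with hT₁
    have hT₁card : T₁.card = m := by rw [hT₁, List.toFinset_card_of_nodup hlnd, hllen]
    have hT₁S : T₁ ⊆ S := by
      intro x hx
      rw [hT₁, List.mem_toFinset] at hx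
      rw [← hbS, List.mem_toFinset]
      exact hlsub.subset hx
    have hrestrict : ∀ c ∈ bs', (c.filter (fun x => decide (x ∈ T₁))).Nodup ∧
        (c.filter (fun x => decide (x ∈ T₁))).toFinset = T₁ := by
      intro c hc
      obtain ⟨hcnd, hcS⟩ := hblocks c (List.mem_cons_of_mem _ hc)
      refine ⟨hcnd.filter _, ?_⟩
      ext x
      simp only [List.mem_toFinset, List.mem_filter, decide_eq_true_eq]
      constructor
      · rintro ⟨_, h⟩; exact h
      · intro h
        refine ⟨?_, h⟩
        rw [← List.mem_toFinset, hcS]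
        exact hT₁S h
    obtain ⟨T, hTT₁, hTk, hTsorted⟩ :=
      ih (bs'.map (fun c => c.filter (fun x => decide (x ∈ T₁)))) k T₁ (by simp [hlen'])
        hk (by rw [hT₁card]) (by
          intro c' hc'
          rw [List.mem_map] at hc'
          obtain ⟨c, hc, rfl⟩ := hc'
          exact hrestrict c hc)
    have hTS : T ⊆ S := subset_trans hTT₁ hT₁S
    -- collapse the double filter
    have hcollapse : ∀ c : List ℕ, (c.filter (fun x => decide (x ∈ T₁))).filter
        (fun x => decide (x ∈ T)) = c.filter (fun x => decide (x ∈ T)) := by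
      intro c
      rw [List.filter_filter]
      apply List.filter_congr
      intro x _
      by_cases hx : x ∈ T
      · simp [hx, hTT₁ hx]
      · simp [hx]
    refine ⟨T, hTS, hTk, ?_⟩
    intro c hc
    rcases List.mem_cons.mp hc with rfl | hc'
    · -- head block
      have hfl : c.filter (fun x => decide (x ∈ T₁)) = l := by
        have : c.filter (fun x => decide (x ∈ T₁)) = c.filter (fun x => decide (x ∈ l)) := by
          apply List.filter_congr
          intro x _
          simp [hT₁]
        rw [this]
        exact filter_sublist_eq hlsub hbnd
      have : c.filter (fun x => decide (x ∈ T)) = l.filter (fun x => decide (x ∈ T)) := by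
        rw [← hfl, hcollapse]
      rw [this]
      rcases hlsort with h | h
      · exact Or.inl (h.sublist (List.filter_sublist (l := l)))
      · exact Or.inr (List.Pairwise.sublist (List.filter_sublist (l := l)) h)
    · have := hTsorted (c.filter (fun x => decide (x ∈ T₁)))
        (List.mem_map.mpr ⟨c, hc', rfl⟩)
      rwa [hcollapse] at this

/-- `f` is an `(r, s)`-formation: a concatenation of `s` permutations of the same
set of `r` distinct letters. -/
def IsFormation (r s : ℕ) (f : List ℕ) : Prop :=
  ∃ (S : Finset ℕ) (blocks : List (List ℕ)),
    S.card = r ∧ blocks.length = s ∧ f = blocks.flatten ∧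
    ∀ b ∈ blocks, b.Nodup ∧ b.toFinset = S

/-- `f` contains `u`: some injective renaming of the letters of `u` is a
(not necessarily contiguous) subsequence of `f`. -/
def Contains (f u : List ℕ) : Prop :=
  ∃ φ : ℕ → ℕ, Set.InjOn φ {a | a ∈ u} ∧ (u.map φ).Sublist f

/-- `w` is the formation width of `u`: the least `s` such that there exists `r`
for which every `(r, s)`-formation contains `u`. -/
def FWidth (u : List ℕ) (w : ℕ) : Prop :=
  IsLeast {s | ∃ r, ∀ f, IsFormation r s f → Contains f u} w

/-- `f` is a binary `(|S|, s)`-formation on letter set `S`: all blocks equal a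
fixed permutation `p` of `S` or its reverse. -/
def IsBinaryFormationOn (S : Finset ℕ) (s : ℕ) (f : List ℕ) : Prop :=
  ∃ (p : List ℕ) (blocks : List (List ℕ)),
    p.Nodup ∧ p.toFinset = S ∧ blocks.length = s ∧ f = blocks.flatten ∧
    ∀ b ∈ blocks, b = p ∨ b = p.reverse

lemma range_toFinset (r : ℕ) : (List.range r).toFinset = Finset.range r := by
  ext x
  simp [List.mem_toFinset, List.mem_range]

lemma dirA {u : List ℕ} {r s : ℕ}
    (hF : ∀ f, IsFormation r s f → Contains f u) :
    ∀ f, IsBinaryFormationOn u.toFinset s f → Contains f u := by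
  intro f hbin
  obtain ⟨p, blocks, hpn, hpS, hlen, hjoin, hblocks⟩ := hbin
  set t : List Bool := blocks.map (fun b => decide (b = p)) with ht
  have hg : mkB p t = f := by
    rw [hjoin]
    unfold mkB
    rw [ht, List.map_map]
    congr 1
    calc blocks.map ((fun o => if o then p else p.reverse) ∘ (fun b => decide (b = p)))
        = blocks.map id := by
          apply List.map_congr_left
          intro b hb
          simp only [Function.comp, id]
          by_cases hbp : b = p
          · simp [hbp]
          · have hbr := (hblocks b hb).resolve_left hbp
            rw [hbr]
            by_cases hrev : p.reverse = p
            · rw [if_pos (by simpa using hrev)]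
              exact hrev.symm
            · rw [if_neg (by simpa using hrev)]
      _ = blocks := List.map_id blocks
  have hC : IsFormation r s (mkB (List.range r) t) := by
    refine ⟨Finset.range r,
      t.map (fun o => if o then List.range r else (List.range r).reverse),
      Finset.card_range r, ?_, by rfl, ?_⟩
    · simp [ht, hlen]
    · intro c hc
      rw [List.mem_map] at hc
      obtain ⟨o, _, rfl⟩ := hc
      cases o <;>
        simp [List.nodup_range, List.toFinset_reverse, range_toFinset]
  obtain ⟨φ, hφinj, hφsub⟩ := hF _ hC
  set V := (u.map φ).toFinset with hV
  set q' := (List.range r).filter (fun x => decide (x ∈ V)) with hq'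
  have hsub2 : (u.map φ).Sublist (mkB q' t) := by
    rw [hq', ← mkB_filter]
    have heq : (u.map φ).filter (fun x => decide (x ∈ V)) = u.map φ := by
      rw [List.filter_eq_self]
      intro a ha
      simp [hV, List.mem_toFinset.mpr ha]
    rw [← heq]
    exact hφsub.filter _
  have hq'nd : q'.Nodup := List.nodup_range.filter _
  have hVlt : ∀ x ∈ V, x < r := by
    intro x hx
    rw [hV, List.mem_toFinset] at hx
    have := mem_mkB (hφsub.subset hx)
    rwa [List.mem_range] at this
  have hq'mem : ∀ x, x ∈ q' ↔ x ∈ V := by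
    intro x
    rw [hq', List.mem_filter]
    simp only [List.mem_range, decide_eq_true_eq]
    exact ⟨fun ⟨_, h⟩ => h, fun h => ⟨hVlt x h, h⟩⟩
  have hVcard : V.card = u.toFinset.card := by
    have hVimg : V = u.toFinset.image φ := by
      ext x
      simp [hV, List.mem_toFinset, List.mem_map, Finset.mem_image]
    rw [hVimg]
    apply Finset.card_image_of_injOn
    rw [List.coe_toFinset]
    exact hφinj
  have hplen : p.length = u.toFinset.card := by
    rw [← hpS, List.toFinset_card_of_nodup hpn]
  have hq'len : q'.length = p.length := by
    rw [← List.toFinset_card_of_nodup hq'nd, hplen, ← hVcard]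
    congr 1
    ext x
    rw [List.mem_toFinset, hq'mem]
  set θ : ℕ → ℕ := fun x => p.getD (q'.idxOf x) 0 with hθ
  have hmapθ : q'.map θ = p := map_getD_indexOf hq'nd hq'len
  have htrans := mkB_transfer θ hmapθ hsub2
  rw [hg, List.map_map] at htrans
  refine ⟨θ ∘ φ, ?_, htrans⟩
  intro a ha b hb h
  apply hφinj ha hb
  have hmem : ∀ c ∈ ({a | a ∈ u} : Set ℕ), φ c ∈ q' := by
    intro c hc
    rw [hq'mem, hV, List.mem_toFinset]
    exact List.mem_map_of_mem hc
  exact injOn_getD_indexOf hq'nd hpn (le_of_eq hq'len) _ (hmem a ha) _ (hmem b hb) h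

lemma dirB {u : List ℕ} {s : ℕ}
    (hB : ∀ f, IsBinaryFormationOn u.toFinset s f → Contains f u) :
    ∃ r, ∀ f, IsFormation r s f → Contains f u := by
  by_cases hu : u = []
  · exact ⟨0, fun f _ => ⟨id, by simp [hu], by simp [hu]⟩⟩
  set k := u.toFinset.card with hk_def
  have hk : 0 < k := by
    rw [hk_def, Finset.card_pos]
    obtain ⟨a, ha⟩ := List.exists_mem_of_ne_nil u hu
    exact ⟨a, List.mem_toFinset.mpr ha⟩
  refine ⟨k ^ 2 ^ s, ?_⟩
  intro f hf
  obtain ⟨S, bs, hScard, hbslen, hjoin, hbs⟩ := hf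
  obtain ⟨T, hTS, hTk, hTsort⟩ := extract s bs k S hbslen hk (le_of_eq hScard.symm) hbs
  set q := T.sort (· ≤ ·) with hq
  have hqnd : q.Nodup := T.sort_nodup _
  have hqsort : q.Pairwise (· < ·) := (Finset.sortedLT_sort T).pairwise
  have hqtoF : q.toFinset = T := Finset.sort_toFinset T _
  have hqlen : q.length = k := by rw [hq, Finset.length_sort, hTk]
  haveI : IsAntisymm ℕ (· < ·) := ⟨fun a b h h' => absurd h' (lt_asymm h)⟩
  have hclass : ∀ b ∈ bs, b.filter (fun x => decide (x ∈ T)) = q ∨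
      b.filter (fun x => decide (x ∈ T)) = q.reverse := by
    intro b hb
    obtain ⟨hbnd, hbS⟩ := hbs b hb
    set fb := b.filter (fun x => decide (x ∈ T)) with hfb
    have hfbnd : fb.Nodup := hbnd.filter _
    have hfbtoF : fb.toFinset = T := by
      ext x
      simp only [hfb, List.mem_toFinset, List.mem_filter, decide_eq_true_eq]
      exact ⟨fun ⟨_, h⟩ => h, fun h => ⟨by rw [← List.mem_toFinset, hbS]; exact hTS h, h⟩⟩
    rcases hTsort b hb with h | h
    · left
      exact List.Perm.eq_of_pairwise' h hqsort
        (List.perm_of_nodup_nodup_toFinset_eq hfbnd hqnd (hfbtoF.trans hqtoF.symm))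
    · right
      have h1 : fb.reverse.Pairwise (· < ·) := by
        rw [List.pairwise_reverse]
        exact h
      have h2 : fb.reverse = q := List.Perm.eq_of_pairwise' h1 hqsort
        (List.perm_of_nodup_nodup_toFinset_eq (by simpa using hfbnd) hqnd
          (by rw [List.toFinset_reverse, hfbtoF, hqtoF]))
      rw [← h2, List.reverse_reverse]
  set t : List Bool := bs.map (fun b => decide (b.filter (fun x => decide (x ∈ T)) = q)) with ht
  have hfilter_join : f.filter (fun x => decide (x ∈ T)) = mkB q t := by
    rw [hjoin]
    unfold mkB
    rw [ht, List.map_map, List.filter_flatten]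
    congr 1
    apply List.map_congr_left
    intro b hb
    simp only [Function.comp]
    rcases hclass b hb with h | h
    · simp [h]
    · by_cases hbq : b.filter (fun x => decide (x ∈ T)) = q
      · simp [hbq]
      · simp only [h, hbq, decide_false, Bool.false_eq_true, if_false]
        by_cases hrev : q.reverse = q
        · simp [hrev]
        · simp [hrev]
  set p₀ := u.dedup with hp₀
  have hp₀nd : p₀.Nodup := u.nodup_dedup
  have hp₀toF : p₀.toFinset = u.toFinset := by
    ext x
    simp [hp₀, List.mem_toFinset, List.mem_dedup]
  have hp₀len : p₀.length = k := by
    rw [hk_def, ← hp₀toF, List.toFinset_card_of_nodup hp₀nd]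
  have hbinary : IsBinaryFormationOn u.toFinset s (mkB p₀ t) :=
    ⟨p₀, t.map (fun o => if o then p₀ else p₀.reverse), hp₀nd, hp₀toF,
      by simp [ht, hbslen], by rfl, by
        intro c hc
        rw [List.mem_map] at hc
        obtain ⟨o, _, rfl⟩ := hc
        cases o <;> simp⟩
  obtain ⟨φ, hφinj, hφsub⟩ := hB _ hbinary
  set θ : ℕ → ℕ := fun x => q.getD (p₀.idxOf x) 0 with hθ
  have hmapθ : p₀.map θ = q := map_getD_indexOf hp₀nd (hp₀len.trans hqlen.symm)
  have htrans := mkB_transfer θ hmapθ hφsub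
  rw [← hfilter_join, List.map_map] at htrans
  refine ⟨θ ∘ φ, ?_, htrans.trans (List.filter_sublist (l := f))⟩
  intro a ha b hb h
  apply hφinj ha hb
  have hmem : ∀ c ∈ ({a | a ∈ u} : Set ℕ), φ c ∈ p₀ := by
    intro c hc
    exact mem_mkB (hφsub.subset (List.mem_map_of_mem hc))
  exact injOn_getD_indexOf hp₀nd hqnd (le_of_eq (hp₀len.trans hqlen.symm)) _
    (hmem a ha) _ (hmem b hb) h

theorem stmt5 (u : List ℕ) (w : ℕ) :
    FWidth u w ↔
      IsLeast {s | ∀ f, IsBinaryFormationOn u.toFinset s f → Contains f u} w := by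
  have hset : {s | ∃ r, ∀ f, IsFormation r s f → Contains f u}
      = {s | ∀ f, IsBinaryFormationOn u.toFinset s f → Contains f u} := by
    ext s
    exact ⟨fun ⟨r, h⟩ => dirA h, fun h => dirB h⟩
  rw [FWidth, hset]
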